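/- Let v1 = (1, 0), v2 = (0, 1), v3 = (√2/2, √2/2) in ℝ^2. There is no unit vector ξ ∈ ℝ^2 such that ⟨ξ, vi⟩^2 = ⟨ξ, vj⟩^2 for all i, j ∈ {1, 2, 3}. -/

import Mathlib

open scoped RealInnerProductSpace

/-- The three directions `v1 = e1`, `v2 = e2`, `v3 = (√2/2, √2/2)` in `ℝ²`. -/
noncomputable def dirs2 : Fin 3 → EuclideanSpace ℝ (Fin 2) :=
  ![(WithLp.equiv 2 (Fin 2 → ℝ)).symm ![1, 0],
    (WithLp.equiv 2 (Fin 2 → ℝ)).symm ![0, 1],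
    (WithLp.equiv 2 (Fin 2 → ℝ)).symm ![Real.sqrt 2 / 2, Real.sqrt 2 / 2]]

/-- In dimension `2`, there is no unit vector `ξ` with `⟨ξ, v_i⟩² = ⟨ξ, v_j⟩²`
for all pairs among `v1 = e1`, `v2 = e2`, `v3 = (√2/2, √2/2)`. -/
theorem stmt5 :
    ¬ ∃ ξ : EuclideanSpace ℝ (Fin 2), ‖ξ‖ = 1 ∧
        ∀ i j : Fin 3, ⟪ξ, dirs2 i⟫ ^ 2 = ⟪ξ, dirs2 j⟫ ^ 2 := by
  rintro ⟨ξ, hn, h⟩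
  have hn2 : ξ 0 ^ 2 + ξ 1 ^ 2 = 1 := by
    have := hn
    rw [EuclideanSpace.norm_eq] at this
    have h2 : Real.sqrt (∑ i, ξ i ^ 2) = 1 := by simpa using this
    have := Real.sqrt_eq_one.mp h2
    simpa [Fin.sum_univ_two] using this
  have h01 := h 0 1
  have h02 := h 0 2
  simp only [dirs2, Matrix.cons_val_zero, Matrix.cons_val_one, Matrix.head_cons,
    Matrix.cons_val_two, Matrix.tail_cons, PiLp.inner_apply, Fin.sum_univ_two,
    WithLp.equiv_symm_apply, PiLp.toLp_apply, RCLike.inner_apply, conj_trivial] at h01 h02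
  have hs : (Real.sqrt 2 / 2) ^ 2 = 1 / 2 := by
    rw [div_pow, Real.sq_sqrt (by norm_num : (2:ℝ) ≥ 0)]; norm_num
  have h02' : ξ 0 ^ 2 = (ξ 0 + ξ 1) ^ 2 / 2 := by
    have : ((Real.sqrt 2 / 2) * ξ 0 + (Real.sqrt 2 / 2) * ξ 1) ^ 2
        = (ξ 0 + ξ 1) ^ 2 * ((Real.sqrt 2 / 2) ^ 2) := by ring
    rw [this, hs] at h02
    linarith [h02]
  nlinarith [sq_nonneg (ξ 0 - ξ 1), sq_nonneg (ξ 0 + ξ 1)]
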